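/- There exists a finite translation quiver (Γ, τ) whose square (Γ^2, τ^2) is not a translation quiver. For instance, take Γ with five vertices a, b, c, d, e, single arrows b → e, d → e and e → c, and τ defined only by τ(b) = a and τ(c) = b: then (Γ, τ) is a translation quiver, but in Γ^2 there is exactly one sectional path of length 2 from d to c while there is no sectional path of length 2 from τ^2(c) = a to d, so (Γ^2, τ^2) fails the translation quiver axiom. -/
import Mathlib


/-- A quiver (given by its arrow types `A x y`) is locally finite if each
vertex has only finitely many arrows between any pair of vertices and only
finitely many neighbours. -/
def QuiverLocFin {V : Type*} (A : V → V → Type*) : Prop :=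
  (∀ x y, Finite (A x y)) ∧ (∀ x, {y | Nonempty (A x y)}.Finite) ∧
    (∀ y, {x | Nonempty (A x y)}.Finite)

/-- The partially defined translation `τ : V → Option V` is injective on its
domain. -/
def TauInjective {V : Type*} (τ : V → Option V) : Prop :=
  ∀ x y z, τ x = some z → τ y = some z → x = y

/-- A translation quiver: a locally finite quiver together with an injective
partially defined translation `τ` such that for every vertex `x` and every
vertex `y` in the domain of `τ`, the number of arrows from `x` to `y` equals
the number of arrows from `τ(y)` to `x`.  The projective vertices are those
outside the domain of `τ` (i.e. those with `τ y = none`). -/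
def IsTranslationQuiver {V : Type*} (A : V → V → Type*) (τ : V → Option V) : Prop :=
  QuiverLocFin A ∧ TauInjective τ ∧
    ∀ x y z, τ y = some z → Nat.card (A x y) = Nat.card (A z x)

/-- The `k`-th iterate of the partially defined map `τ`. -/
def iterTau {V : Type*} (τ : V → Option V) : ℕ → V → Option V
  | 0, x => some x
  | k+1, x => (τ x).bind (iterTau τ k)

/-- The sectional condition on a sequence of vertices `v 0, v 1, …, v m`:
`τ (v (s+1)) ≠ v (s-1)` for all `0 < s < m` for which `τ (v (s+1))` is
defined. -/
def SectCond {V : Type*} (τ : V → Option V) (m : ℕ) (v : Fin (m+1) → V) : Prop :=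
  ∀ (s : ℕ) (_ : 1 ≤ s) (h2 : s + 1 ≤ m),
    τ (v ⟨s+1, by omega⟩) ≠ some (v ⟨s-1, by omega⟩)

/-- `v 0, v 1, …, v m` is (the sequence of vertices of) a sectional path:
there is an arrow `v s → v (s+1)` for each `s`, and the sectional condition
holds. -/
def IsSectionalPath {V : Type*} (A : V → V → Type*) (τ : V → Option V) (m : ℕ)
    (v : Fin (m+1) → V) : Prop :=
  (∀ s : Fin m, Nonempty (A (v s.castSucc) (v s.succ))) ∧ SectCond τ m v

/-- The type of sectional paths of length `m` from `x` to `y`: a sequence of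
vertices `v 0 = x, v 1, …, v m = y` satisfying the sectional condition,
together with a chosen arrow `v s → v (s+1)` for each `s`. -/
def SectPath {V : Type*} (A : V → V → Type*) (τ : V → Option V) (m : ℕ)
    (x y : V) : Type _ :=
  Σ v : {v : Fin (m+1) → V // v 0 = x ∧ v (Fin.last m) = y ∧ SectCond τ m v},
    ∀ s : Fin m, A (v.1 s.castSucc) (v.1 s.succ)

/-- The quiver on five vertices `a = 0`, `b = 1`, `c = 2`, `d = 3`, `e = 4`
with single arrows `b → e`, `d → e` and `e → c`. -/
def exA : Fin 5 → Fin 5 → Type :=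
  fun x y => PLift ((x = 1 ∧ y = 4) ∨ (x = 3 ∧ y = 4) ∨ (x = 4 ∧ y = 2))

/-- The translation defined only by `τ b = a` and `τ c = b`. -/
def exTau : Fin 5 → Option (Fin 5) :=
  fun x => if x = 1 then some 0 else if x = 2 then some 1 else none

lemma plift_card (p : Prop) [Decidable p] : Nat.card (PLift p) = if p then 1 else 0 := by
  split
  · exact Nat.card_eq_one_iff_unique.mpr ⟨inferInstance, ⟨⟨‹p›⟩⟩⟩
  · have : IsEmpty (PLift p) := ⟨fun x => ‹¬p› x.down⟩
    exact Nat.card_of_isEmpty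

lemma exA_card (x y : Fin 5) :
    Nat.card (exA x y) =
      if (x = 1 ∧ y = 4) ∨ (x = 3 ∧ y = 4) ∨ (x = 4 ∧ y = 2) then 1 else 0 :=
  plift_card _

instance exA_subsingleton (x y : Fin 5) : Subsingleton (exA x y) :=
  inferInstanceAs (Subsingleton (PLift _))

/-- The unique sectional path `d → e → c`. -/
def exV : Fin 3 → Fin 5 := fun i => if i.val = 0 then 3 else if i.val = 1 then 4 else 2

/-- There is a finite translation quiver whose square is not a translation
quiver: for the example `(exA, exTau)` above (which is a translation quiver on
a finite vertex set), `τ² c = a` is defined, there is exactly one sectional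
path of length `2` from `d` to `c` but no sectional path of length `2` from
`a = τ² c` to `d`; hence `(Γ², τ²)` fails the translation quiver axiom, i.e.
it is not a translation quiver. -/
theorem stmt14 :
    IsTranslationQuiver exA exTau ∧
    iterTau exTau 2 2 = some 0 ∧
    Nat.card (SectPath exA exTau 2 3 2) = 1 ∧
    Nat.card (SectPath exA exTau 2 0 3) = 0 ∧
    ¬ IsTranslationQuiver (fun x y => SectPath exA exTau 2 x y) (iterTau exTau 2) := by
  have hiter : iterTau exTau 2 2 = some 0 := by decide
  have hTQ : IsTranslationQuiver exA exTau := by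
    refine ⟨⟨fun x y => inferInstanceAs (Finite (PLift _)),
      fun x => Set.toFinite _, fun y => Set.toFinite _⟩,
      (by decide : ∀ x y z : Fin 5, exTau x = some z → exTau y = some z → x = y), ?_⟩
    intro x y z h
    simp only [exA_card]
    revert h
    revert x y z
    decide
  have h1 : Nat.card (SectPath exA exTau 2 3 2) = 1 := by
    rw [Nat.card_eq_one_iff_unique]
    constructor
    · constructor
      rintro ⟨⟨v, hv0, hv2, hsect⟩, f⟩ ⟨⟨w, hw0, hw2, hwsect⟩, g⟩
      have hfv : (v 0 = 1 ∧ v 1 = 4) ∨ (v 0 = 3 ∧ v 1 = 4) ∨ (v 0 = 4 ∧ v 1 = 2) :=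
        (f 0).down
      have hfw : (w 0 = 1 ∧ w 1 = 4) ∨ (w 0 = 3 ∧ w 1 = 4) ∨ (w 0 = 4 ∧ w 1 = 2) :=
        (g 0).down
      rw [hv0] at hfv
      rw [hw0] at hfw
      have hv1 : v 1 = 4 := by
        rcases hfv with ⟨h, h'⟩ | ⟨h, h'⟩ | ⟨h, h'⟩ <;>
          first | exact h' | exact absurd h (by decide)
      have hw1 : w 1 = 4 := by
        rcases hfw with ⟨h, h'⟩ | ⟨h, h'⟩ | ⟨h, h'⟩ <;>
          first | exact h' | exact absurd h (by decide)
      have hvw : v = w := by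
        funext i
        rcases i with ⟨iv, hi⟩
        interval_cases iv
        · exact hv0.trans hw0.symm
        · exact hv1.trans hw1.symm
        · exact hv2.trans hw2.symm
      have hfst : (⟨v, hv0, hv2, hsect⟩ :
          {v : Fin 3 → Fin 5 // v 0 = 3 ∧ v (Fin.last 2) = 2 ∧ SectCond exTau 2 v}) =
          ⟨w, hw0, hw2, hwsect⟩ := Subtype.ext hvw
      refine Sigma.ext hfst (Subsingleton.helim ?_ f g)
      exact congrArg (fun t : {v : Fin 3 → Fin 5 // v 0 = 3 ∧ v (Fin.last 2) = 2 ∧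
        SectCond exTau 2 v} => ∀ s : Fin 2, exA (t.1 s.castSucc) (t.1 s.succ)) hfst
    · have hsc : SectCond exTau 2 exV := by
        intro s h1 h2 h
        have hs : s = 1 := by omega
        subst hs
        exact (by decide : exTau 2 ≠ some 3) h
      exact ⟨⟨⟨exV, rfl, rfl, hsc⟩,
        fun s => match s with
          | 0 => ⟨Or.inr (Or.inl ⟨rfl, rfl⟩)⟩
          | 1 => ⟨Or.inr (Or.inr ⟨rfl, rfl⟩)⟩⟩⟩
  have h0 : Nat.card (SectPath exA exTau 2 0 3) = 0 := by
    have : IsEmpty (SectPath exA exTau 2 0 3) := by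
      constructor
      rintro ⟨⟨v, hv0, hv2, hsect⟩, f⟩
      have hfv : (v 0 = 1 ∧ v 1 = 4) ∨ (v 0 = 3 ∧ v 1 = 4) ∨ (v 0 = 4 ∧ v 1 = 2) :=
        (f 0).down
      rw [hv0] at hfv
      rcases hfv with ⟨h, _⟩ | ⟨h, _⟩ | ⟨h, _⟩ <;> exact absurd h (by decide)
    exact Nat.card_of_isEmpty
  refine ⟨hTQ, hiter, h1, h0, ?_⟩
  rintro ⟨-, -, hcard⟩
  have := hcard 3 2 0 hiter
  rw [h1, h0] at this
  exact one_ne_zero this
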